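/- Let h : 𝒯 → 𝒜 be a homology theory and let α : X → Y be a morphism in 𝒯 with h(α) = 0. If X →α Y →β Z →γ X[1] and X →α Y →β' Z' →γ' X[1] are two distinguished triangles with first morphism α, then the two resulting short exact sequences 0 → h(Y) → h(Z) → h(X)[1] → 0 and 0 → h(Y) → h(Z') → h(X)[1] → 0 are equivalent extensions of h(X)[1] by h(Y): there is an isomorphism h(Z) → h(Z') in 𝒜 commuting with the maps from h(Y) and to h(X)[1]. -/

import Mathlib

open CategoryTheory Category Limits Pretriangulated

/-- For a homology theory `h` and `α : X ⟶ Y` with `h(α) = 0`,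
any two distinguished triangles on `α` induce equivalent extensions of `h(X)⟦1⟧`
by `h(Y)`: there is an isomorphism `h(Z) ≅ h(Z')` commuting with the maps from
`h(Y)` and to `h(X)⟦1⟧` (equivalently, to `h(X⟦1⟧)`). -/
theorem extension_class_well_defined
    {T : Type*} [Category T] [HasZeroObject T] [Preadditive T] [HasShift T ℤ]
    [∀ n : ℤ, (shiftFunctor T n).Additive] [Pretriangulated T]
    {A : Type*} [Category A] [Abelian A] [HasShift A ℤ]
    [∀ n : ℤ, (shiftFunctor A n).Additive]
    (h : T ⥤ A) [h.Additive] [h.CommShift ℤ] [h.IsHomological]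
    {X Y Z Z' : T} (α : X ⟶ Y) (hα : h.map α = 0)
    (β : Y ⟶ Z) (γ : Z ⟶ X⟦(1:ℤ)⟧) (hT : Triangle.mk α β γ ∈ distTriang T)
    (β' : Y ⟶ Z') (γ' : Z' ⟶ X⟦(1:ℤ)⟧) (hT' : Triangle.mk α β' γ' ∈ distTriang T) :
    ∃ e : h.obj Z ≅ h.obj Z',
      h.map β ≫ e.hom = h.map β' ∧ e.hom ≫ h.map γ' = h.map γ := by
  let e := isoTriangleOfIso₁₂ _ _ hT hT' (Iso.refl X) (Iso.refl Y) (by exact (comp_id α).trans (id_comp α).symm)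
  have he : e.hom.hom₂ = 𝟙 Y := rfl
  have h1 : e.hom.hom₁ = 𝟙 X := rfl
  have h2 := e.hom.comm₂
  have h3 := e.hom.comm₃
  refine ⟨(Triangle.π₃ ⋙ h).mapIso e, ?_, ?_⟩
  · dsimp at h2 ⊢
    change β ≫ e.hom.hom₃ = e.hom.hom₂ ≫ β' at h2
    change h.map β ≫ h.map e.hom.hom₃ = h.map β'
    exact (h.map_comp β e.hom.hom₃).symm.trans (congrArg h.map (h2.trans (by rw [he]; exact id_comp β')))
  · dsimp at h3 ⊢
    change γ ≫ (shiftFunctor T (1:ℤ)).map e.hom.hom₁ = e.hom.hom₃ ≫ γ' at h3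
    change h.map e.hom.hom₃ ≫ h.map γ' = h.map γ
    exact (h.map_comp e.hom.hom₃ γ').symm.trans (congrArg h.map (h3.symm.trans (by rw [h1]; exact (congrArg (γ ≫ ·) ((shiftFunctor T (1:ℤ)).map_id X)).trans (comp_id γ))))
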